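/- Let $n, \alpha \geq 2$ and let $K$ be a field whose characteristic is $0$ or greater than $n$. If $A \in M_n(K)$ has $n$ distinct eigenvalues in the algebraic closure $\overline{K}$ (equivalently, its characteristic polynomial is separable), then $X = 0$ is the only matrix $X \in M_n(K)$ satisfying $AX - XA = X^{\alpha}$. -/

import Mathlib

open Polynomial Module Set Matrix

section Helpers

section RingAux
variable {R : Type*} [Ring R]

lemma comm_pow_aux {a y w : R} (h1 : a * y - y * a = w) (h2 : y * w = w * y) :
    ∀ N : ℕ, a * y ^ (N + 1) - y ^ (N + 1) * a = (N + 1) • (y ^ N * w) := by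
  intro N
  induction N with
  | zero => simpa using h1
  | succ N ih =>
    have e : a * (y ^ (N+1) * y) - (y ^ (N+1) * y) * a =
        (a * y ^ (N+1) - y ^ (N+1) * a) * y + y ^ (N+1) * (a * y - y * a) := by
      noncomm_ring
    have e2 : (y ^ N * w) * y = y ^ (N + 1) * w := by
      rw [mul_assoc, ← h2, ← mul_assoc, ← pow_succ]
    rw [pow_succ y (N+1), e, ih, h1, smul_mul_assoc, e2, succ_nsmul (y ^ (N+1) * w) (N+1)]

lemma binom_aux {z ν : R} (hz' : z * ν = ν * z) :
    ∀ m : ℕ, ∃ c : R, (z + ν) ^ m = z ^ m + ν * c ∧ Commute ν c ∧ Commute z c := by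
  have hz : Commute z ν := hz'
  intro m
  induction m with
  | zero => exact ⟨0, by simp⟩
  | succ m ih =>
    obtain ⟨c, hc, hνc, hzc⟩ := ih
    refine ⟨z ^ m + c * (z + ν), ?_, ?_, ?_⟩
    · have hp : z ^ m * ν = ν * z ^ m := (hz.pow_left m)
      calc (z + ν) ^ (m+1) = (z ^ m + ν * c) * (z + ν) := by rw [pow_succ, hc]
        _ = z ^ (m+1) + (z ^ m * ν + (ν * c * z + ν * c * ν)) := by
            rw [add_mul, mul_add, mul_add, pow_succ, add_assoc]
        _ = z ^ (m+1) + ν * (z ^ m + c * (z + ν)) := by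
            rw [hp, mul_add, mul_add, mul_add, mul_assoc, mul_assoc]
    · exact ((hz.symm.pow_right m).add_right ((hνc.mul_right (hz.symm.add_right (Commute.refl ν))))) 
    · exact ((Commute.refl z).pow_right m).add_right (hzc.mul_right ((Commute.refl z).add_right hz))
end RingAux

section Diag
variable {L : Type*} [Field L] {n : ℕ}

lemma diag_step {d : Fin n → L} (hd : Function.Injective d)
    {Y : Matrix (Fin n) (Fin n) L} {α : ℕ} (hα : 2 ≤ α)
    (h : Matrix.diagonal d * Y - Y * Matrix.diagonal d = Y ^ α)
    (r : ℕ) (hY : Y ^ (r + 2) = 0) : Y ^ (r + 1) = 0 := by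
  have hbig : ∀ m : ℕ, r + 2 ≤ m → Y ^ m = 0 := by
    intro m hm
    calc Y ^ m = Y ^ (r + 2) * Y ^ (m - (r + 2)) := by rw [← pow_add]; congr 1; omega
    _ = 0 := by rw [hY, zero_mul]
  have hcomm : Y * Y ^ α = Y ^ α * Y := by rw [← pow_succ, ← pow_succ']
  have key := comm_pow_aux h hcomm r
  have hz : Y ^ r * Y ^ α = 0 := by rw [← pow_add]; exact hbig _ (by omega)
  rw [hz, smul_zero, sub_eq_zero] at key
  set N := Y ^ (r + 1) with hN
  have hoff : ∀ i j, i ≠ j → N i j = 0 := by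
    intro i j hij
    have e := congrFun (congrFun key i) j
    rw [Matrix.diagonal_mul, Matrix.mul_diagonal] at e
    have : (d i - d j) * N i j = 0 := by rw [sub_mul, e, mul_comm, sub_self]
    rcases mul_eq_zero.mp this with h' | h'
    · exact absurd (sub_eq_zero.mp h') (fun hc => hij (hd hc))
    · exact h'
  have hsq : N * N = 0 := by
    rw [hN, ← pow_add]; exact hbig _ (by omega)
  ext i j
  rcases eq_or_ne i j with rfl | hij
  · have e := congrFun (congrFun hsq i) i
    rw [Matrix.mul_apply] at e
    have e2 : ∑ k, N i k * N k i = N i i * N i i := by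
      refine Finset.sum_eq_single i (fun k _ hk => ?_) (by simp)
      rw [hoff i k (Ne.symm hk), zero_mul]
    rw [e2] at e
    simpa using mul_self_eq_zero.mp e
  · simpa using hoff i j hij

lemma diag_nilp_zero {d : Fin n → L} (hd : Function.Injective d)
    {Y : Matrix (Fin n) (Fin n) L} {α : ℕ} (hα : 2 ≤ α)
    (h : Matrix.diagonal d * Y - Y * Matrix.diagonal d = Y ^ α)
    (hnil : IsNilpotent Y) : Y = 0 := by
  obtain ⟨s, hs⟩ := hnil
  have hs' : Y ^ (s + 1) = 0 := by rw [pow_succ, hs, zero_mul]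
  clear hs
  induction s with
  | zero => simpa using hs'
  | succ s ih => exact ih (diag_step hd hα h s hs')
  
end Diag

section RestrictAux
variable {K V : Type*} [Field K] [AddCommGroup V] [Module K V]

lemma restrict_pow_apply (f : Module.End K V) {p : Submodule K V} (hf : ∀ x ∈ p, f x ∈ p)
    (k : ℕ) (x : p) : (((f.restrict hf) ^ k) x : V) = (f ^ k) (x : V) := by
  induction k with
  | zero => simp
  | succ k ih =>
    rw [pow_succ', pow_succ', Module.End.mul_apply, Module.End.mul_apply,
      LinearMap.restrict_coe_apply, ih]

lemma restrict_mul (f g : Module.End K V) {p : Submodule K V} (hf : ∀ x ∈ p, f x ∈ p)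
    (hg : ∀ x ∈ p, g x ∈ p) (hfg : ∀ x ∈ p, (f * g) x ∈ p) :
    (f * g).restrict hfg = f.restrict hf * g.restrict hg := by
  ext x
  simp [LinearMap.restrict_coe_apply, Module.End.mul_apply]
end RestrictAux

lemma exists_eigenvector {L : Type*} [Field L] {n : ℕ} (M : Matrix (Fin n) (Fin n) L)
    {μ : L} (hroot : M.charpoly.IsRoot μ) :
    ∃ v : Fin n → L, v ≠ 0 ∧ M *ᵥ v = μ • v := by
  classical
  have hdet : (μ • (1 : Matrix (Fin n) (Fin n) L) - M).det = 0 := by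
    have hmapeq : (charmatrix M).map ⇑(evalRingHom μ) =
        μ • (1 : Matrix (Fin n) (Fin n) L) - M := by
      ext i j
      rcases eq_or_ne i j with rfl | hij
      · simp [charmatrix_apply_eq]
      · simp [charmatrix_apply_ne _ _ _ hij, Matrix.one_apply_ne hij]
    have hdet2 := (evalRingHom μ).map_det (charmatrix M)
    rw [RingHom.mapMatrix_apply, hmapeq] at hdet2
    rw [← hdet2]
    exact hroot
  obtain ⟨v, hv0, hv⟩ := Matrix.exists_mulVec_eq_zero_iff.mpr hdet
  refine ⟨v, hv0, ?_⟩
  rw [Matrix.sub_mulVec, Matrix.smul_mulVec, Matrix.one_mulVec, sub_eq_zero] at hv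
  exact hv.symm

section NilpLemma
variable {L : Type*} [Field L] [IsAlgClosed L] {n α : ℕ}

lemma matrix_nilp (hα : 2 ≤ α)
    (hchar : ∀ m : ℕ, 1 ≤ m → m ≤ n → (m : L) ≠ 0)
    (A M : Matrix (Fin n) (Fin n) L) (h : A * M - M * A = M ^ α) :
    IsNilpotent M := by
  rcases Nat.eq_zero_or_pos n with rfl | hn
  · exact ⟨1, by ext i j; exact i.elim0⟩
  by_contra hM
  set p := M.charpoly with hp
  have hmono : p.Monic := M.charpoly_monic
  have hdeg : p.natDegree = n := by rw [hp, Matrix.charpoly_natDegree_eq_dim, Fintype.card_fin]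
  have hsplits : p.Splits := IsAlgClosed.splits p
  have hex : ∃ μ ∈ p.roots, μ ≠ 0 := by
    by_contra hall
    push_neg at hall
    have hprod : p = (p.roots.map fun a => X - C a).prod :=
      hsplits.eq_prod_roots_of_monic hmono
    have hcard : p.roots.card = n := by rw [splits_iff_card_roots.mp hsplits, hdeg]
    have hmap : p.roots.map (fun a => X - C a) = p.roots.map (fun _ => (X : L[X])) := by
      apply Multiset.map_congr rfl
      intro a ha
      rw [hall a ha, map_zero, sub_zero]
    have hpX : p = X ^ n := by
      rw [hprod, hmap, Multiset.map_const', Multiset.prod_replicate, hcard]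
    have : M ^ n = 0 := by
      have h0 := M.aeval_self_charpoly
      rwa [← hp, hpX, map_pow, aeval_X] at h0
    exact hM ⟨n, this⟩
  obtain ⟨μ, hμroots, hμ0⟩ := hex
  have hroot : p.IsRoot μ := isRoot_of_mem_roots hμroots
  obtain ⟨v, hv0, hMv⟩ := exists_eigenvector M hroot
  set Φ := Matrix.toLinAlgEquiv' (R := L) (n := Fin n)
  set f : Module.End L (Fin n → L) := Φ M with hf
  set g : Module.End L (Fin n → L) := Φ A with hg
  have hgf : g * f - f * g = f ^ α := by
    rw [hf, hg, ← _root_.map_mul, ← _root_.map_mul, ← map_sub, h, map_pow]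
  have hfv : f v = μ • v := by rw [hf, Matrix.toLinAlgEquiv'_apply]; exact hMv
  set z := algebraMap L (Module.End L (Fin n → L)) μ with hz
  set y : Module.End L (Fin n → L) := f - z with hy
  have hczf : Commute z f := Algebra.commutes μ f
  have h1 : g * y - y * g = f ^ α := by
    have hzg : z * g = g * z := Algebra.commutes μ g
    have e : g * y - y * g = (g * f - f * g) + (z * g - g * z) := by
      rw [hy, mul_sub, sub_mul]; abel
    rw [e, hzg, sub_self, add_zero, hgf]
  have hcyfα : Commute y (f ^ α) := by
    have hzfα : Commute z (f ^ α) := Algebra.commutes μ (f ^ α)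
    exact ((Commute.refl f).pow_right α).sub_left hzfα
  have h2 : y * f ^ α = f ^ α * y := hcyfα.eq
  have key := comm_pow_aux h1 h2
  set dV := finrank L (Fin n → L) with hdV
  have hdVn : dV = n := by rw [hdV, Module.finrank_fin_fun]
  set W := LinearMap.ker (y ^ dV) with hW
  have hyv : y v = 0 := by
    rw [hy, LinearMap.sub_apply, hfv, hz, Module.algebraMap_end_apply, sub_self]
  have hvW : v ∈ W := by
    rw [hW, LinearMap.mem_ker]
    obtain ⟨m, hm⟩ : ∃ m, dV = m + 1 := ⟨dV - 1, by omega⟩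
    rw [hm, pow_succ, Module.End.mul_apply, hyv, map_zero]
  have hcyy : ∀ (k : ℕ) (x : Fin n → L), (y ^ k) (y x) = y ((y ^ k) x) := by
    intro k x
    rw [← Module.End.mul_apply, ← Module.End.mul_apply, ← pow_succ, ← pow_succ']
  have hyW : ∀ x ∈ W, y x ∈ W := by
    intro x hx
    rw [hW, LinearMap.mem_ker] at hx ⊢
    rw [hcyy, hx, map_zero]
  have hfW : ∀ x ∈ W, f x ∈ W := by
    intro x hx
    have : f x = y x + μ • x := by
      rw [hy, LinearMap.sub_apply, hz, Module.algebraMap_end_apply]; abel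
    rw [this]
    exact W.add_mem (hyW x hx) (W.smul_mem μ hx)
  have hgW : ∀ x ∈ W, g x ∈ W := by
    intro x hx
    rw [hW, LinearMap.mem_ker] at hx
    have happ := congrArg (fun (T : Module.End L (Fin n → L)) => T x) (key dV)
    simp only [LinearMap.sub_apply, Module.End.mul_apply, LinearMap.smul_apply] at happ
    have e1 : (y ^ (dV + 1)) x = 0 := by
      rw [pow_succ', Module.End.mul_apply, hx, map_zero]
    have e2 : (y ^ dV) ((f ^ α) x) = 0 := by
      have hc : Commute (y ^ dV) (f ^ α) := hcyfα.pow_left dV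
      rw [← Module.End.mul_apply, hc.eq, Module.End.mul_apply, hx, map_zero]
    rw [e1, e2, map_zero, smul_zero, zero_sub, neg_eq_zero] at happ
    have hker : LinearMap.ker (y ^ (dV + 1)) = LinearMap.ker (y ^ dV) := by
      rw [hdV]
      exact Module.End.ker_pow_eq_ker_pow_finrank_of_le (Nat.le_succ _)
    rw [hW, ← hker, LinearMap.mem_ker]
    exact happ
  set f' : Module.End L W := f.restrict hfW with hf'
  set g' : Module.End L W := g.restrict hgW with hg'
  have hrel : g' * f' - f' * g' = f' ^ α := by
    apply LinearMap.ext; intro u; apply Subtype.ext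
    have l1 : (((g' * f') u : W) : Fin n → L) = g (f (u : Fin n → L)) := by
      rw [Module.End.mul_apply, hg', LinearMap.restrict_coe_apply, hf',
        LinearMap.restrict_coe_apply]
    have l2 : (((f' * g') u : W) : Fin n → L) = f (g (u : Fin n → L)) := by
      rw [Module.End.mul_apply, hf', LinearMap.restrict_coe_apply, hg',
        LinearMap.restrict_coe_apply]
    have rhs : (((f' ^ α) u : W) : Fin n → L) = (f ^ α) (u : Fin n → L) := by
      rw [hf']; exact restrict_pow_apply f hfW α u
    rw [LinearMap.sub_apply, Submodule.coe_sub, l1, l2, rhs, ← Module.End.mul_apply,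
      ← Module.End.mul_apply, ← LinearMap.sub_apply, hgf]
  have htr0 : LinearMap.trace L W (f' ^ α) = 0 := by
    have e1 : LinearMap.trace L W (g' * f' - f' * g')
        = LinearMap.trace L W (g' * f') - LinearMap.trace L W (f' * g') := by exact map_sub (LinearMap.trace L W) (g' * f') (f' * g')
    have e2 : LinearMap.trace L W (g' * f') = LinearMap.trace L W (f' * g') :=
      LinearMap.trace_mul_comm L g' f'
    rw [← hrel, e1, e2, sub_self]
  set z' := algebraMap L (Module.End L W) μ with hz'
  set ν : Module.End L W := f' - z' with hν
  have hνeq : ν = y.restrict hyW := by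
    ext u
    rw [hν, LinearMap.sub_apply, LinearMap.restrict_coe_apply, Submodule.coe_sub,
      hf', LinearMap.restrict_coe_apply, hy, LinearMap.sub_apply, hz, hz',
      Module.algebraMap_end_apply, Module.algebraMap_end_apply, Submodule.coe_smul]
  have hνpow : ν ^ dV = 0 := by
    rw [hνeq]
    apply LinearMap.ext; intro u
    apply Subtype.ext
    have hu : (y ^ dV) (u : Fin n → L) = 0 := LinearMap.mem_ker.mp u.2
    simp only [LinearMap.zero_apply, ZeroMemClass.coe_zero]
    exact (restrict_pow_apply y hyW dV u).trans hu
  have hczν : Commute z' ν := Algebra.commutes μ ν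
  obtain ⟨c, hc, hνc, -⟩ := binom_aux (R := Module.End L W) hczν.eq α
  have hf'ν : f' = z' + ν := by rw [hν]; abel
  have hfα : f' ^ α = z' ^ α + ν * c := by rw [hf'ν]; exact hc
  have htrν : LinearMap.trace L W (ν * c) = 0 := by
    have hnilνc : IsNilpotent (ν * c) := ⟨dV, by rw [hνc.mul_pow, hνpow, zero_mul]⟩
    exact (LinearMap.isNilpotent_trace_of_isNilpotent hnilνc).eq_zero
  have htrz : LinearMap.trace L W (z' ^ α) = μ ^ α * (finrank L W : L) := by
    rw [hz', ← _root_.map_pow, Module.algebraMap_end_eq_smul_id, _root_.map_smul, LinearMap.trace_id,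
      smul_eq_mul]
  have h1le : 1 ≤ finrank L W := by
    have : Nontrivial W := ⟨⟨⟨v, hvW⟩, 0, by simp [Subtype.ext_iff, hv0]⟩⟩
    exact Module.finrank_pos
  have hle : finrank L W ≤ n :=
    le_trans (Submodule.finrank_le W) (le_of_eq (Module.finrank_fin_fun L))
  have hne : (finrank L W : L) ≠ 0 := hchar _ h1le hle
  rw [hfα, map_add, htrν, add_zero, htrz] at htr0
  exact (mul_ne_zero (pow_ne_zero _ hμ0) hne) htr0
end NilpLemma

end Helpers


/-- Let `n, α ≥ 2` and `K` a field of characteristic `0` or greater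
than `n`. If `A ∈ Mₙ(K)` has `n` distinct eigenvalues in the algebraic closure, i.e. its
characteristic polynomial is separable, then `X = 0` is the only solution of
`AX - XA = Xᵅ`. -/
theorem stmt7 (n α : ℕ) (hn : 2 ≤ n) (hα : 2 ≤ α) (K : Type*) [Field K]
    (hchar : ringChar K = 0 ∨ n < ringChar K)
    (A : Matrix (Fin n) (Fin n) K) (hsep : A.charpoly.Separable)
    (X : Matrix (Fin n) (Fin n) K) (h : A * X - X * A = X ^ α) :
    X = 0 := by
  classical
  set L := AlgebraicClosure K
  set φ : Matrix (Fin n) (Fin n) K →+* Matrix (Fin n) (Fin n) L :=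
    (algebraMap K L).mapMatrix with hφ
  set A' := φ A with hA'
  set X' := φ X with hX'
  have h' : A' * X' - X' * A' = X' ^ α := by
    rw [hA', hX', ← _root_.map_mul, ← _root_.map_mul, ← map_sub, h, _root_.map_pow]
  have hcharL : ∀ m : ℕ, 1 ≤ m → m ≤ n → (m : L) ≠ 0 := by
    intro m h1 h2 h0
    have hK : (m : K) = 0 := by
      apply (algebraMap K L).injective
      rw [map_natCast, map_zero, h0]
    rw [CharP.cast_eq_zero_iff K (ringChar K) m] at hK
    rcases hchar with hc | hc
    · rw [hc, zero_dvd_iff] at hK; omega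
    · exact absurd (Nat.le_of_dvd (by omega) hK) (by omega)
  have hnil : IsNilpotent X' := matrix_nilp hα hcharL A' X' h'
  -- eigen data for A'
  have hsep' : A'.charpoly.Separable := by
    rw [hA', RingHom.mapMatrix_apply, Matrix.charpoly_map]
    exact hsep.map
  set p := A'.charpoly with hp
  have hmono : p.Monic := A'.charpoly_monic
  have hdeg : p.natDegree = n := by rw [hp, Matrix.charpoly_natDegree_eq_dim, Fintype.card_fin]
  have hsplits : p.Splits := IsAlgClosed.splits p
  have hnodup : p.roots.Nodup := Polynomial.nodup_roots hsep'
  have hcard : p.roots.card = n := by rw [splits_iff_card_roots.mp hsplits, hdeg]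
  set s : Finset L := ⟨p.roots, hnodup⟩ with hsdef
  have hscard : s.card = n := hcard
  set e := Finset.equivFinOfCardEq hscard with he
  set d : Fin n → L := fun i => ((e.symm i : s) : L) with hd
  have hdinj : Function.Injective d := by
    intro i j hij
    exact e.symm.injective (Subtype.ext hij)
  have hdroot : ∀ i, p.IsRoot (d i) := by
    intro i
    have hm : (d i) ∈ p.roots := (e.symm i).2
    exact isRoot_of_mem_roots hm
  choose v hv0 hvA using fun i => exists_eigenvector A' (hdroot i)
  haveI : Nonempty (Fin n) := ⟨⟨0, by omega⟩⟩
  set g : Module.End L (Fin n → L) := Matrix.toLinAlgEquiv' A' with hg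
  have heig : ∀ i, g.HasEigenvector (d i) (v i) := by
    intro i
    constructor
    · rw [Module.End.mem_eigenspace_iff, hg, Matrix.toLinAlgEquiv'_apply]
      exact hvA i
    · exact hv0 i
  have hli := g.eigenvectors_linearIndependent' d hdinj v heig
  have hcard2 : Fintype.card (Fin n) = finrank L (Fin n → L) := by
    rw [Fintype.card_fin, Module.finrank_fin_fun]
  set b : Basis (Fin n) L (Fin n → L) := basisOfLinearIndependentOfCardEqFinrank hli hcard2
    with hb
  have hbv : ∀ i, b i = v i := fun i => by
    rw [hb, coe_basisOfLinearIndependentOfCardEqFinrank]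
  set Ψ : Matrix (Fin n) (Fin n) L ≃ₐ[L] Matrix (Fin n) (Fin n) L :=
    (Matrix.toLinAlgEquiv' (R := L) (n := Fin n)).trans (LinearMap.toMatrixAlgEquiv b) with hΨ
  have hΨA : Ψ A' = Matrix.diagonal d := by
    ext i j
    have hstep : (Matrix.toLinAlgEquiv' A') (b j) = d j • b j := by
      rw [hbv j, Matrix.toLinAlgEquiv'_apply, hvA j]
    rw [hΨ]
    show (LinearMap.toMatrixAlgEquiv b (Matrix.toLinAlgEquiv' A')) i j = _
    rw [LinearMap.toMatrixAlgEquiv_apply, hstep, _root_.map_smul, b.repr_self]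
    rcases eq_or_ne i j with rfl | hij
    · simp [Matrix.diagonal_apply_eq]
    · simp [Matrix.diagonal_apply_ne _ hij, Finsupp.single_apply, Ne.symm hij]
  have hrelY : Matrix.diagonal d * Ψ X' - Ψ X' * Matrix.diagonal d = (Ψ X') ^ α := by
    rw [← hΨA, ← _root_.map_mul Ψ, ← _root_.map_mul Ψ, ← _root_.map_sub Ψ, h', _root_.map_pow]
  have hnilY : IsNilpotent (Ψ X') := hnil.map Ψ
  have hY0 : Ψ X' = 0 := diag_nilp_zero hdinj hα hrelY hnilY
  have hX'0 : X' = 0 := Ψ.injective (by rw [hY0, map_zero])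
  ext i j
  have hentry : algebraMap K L (X i j) = 0 := by
    have hXij : X' i j = 0 := by rw [hX'0]; rfl
    rwa [hX', hφ, RingHom.mapMatrix_apply, Matrix.map_apply] at hXij
  have hinj := (algebraMap K L).injective
    (by rw [hentry, map_zero] : algebraMap K L (X i j) = algebraMap K L 0)
  simpa using hinj
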